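/- Splitting Lemma: Let X be an ordered metric space (partial order with closed graph). Let n, m ≥ 1 and let x : Fin n → X and y : Fin m → X be tuples. Then the empirical distribution i_n(x) is below i_m(y) in the stochastic order (i.e. there is a coupling of i_n(x) and i_m(y) supported on {(a,b) : a ≤ b}) if and only if there exist k ≥ 1 and maps φ : Fin k → Fin n and ψ : Fin k → Fin m, each having all fibers of equal cardinality (|φ⁻¹(i)| is the same for all i ∈ Fin n, and |ψ⁻¹(j)| is the same for all j ∈ Fin m), such that x(φ(l)) ≤ y(ψ(l)) for all l ∈ Fin k. -/

import Mathlib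

open MeasureTheory

/-- A coupling of two Borel probability measures `p` and `q` on `Z` is a measure on
`Z × Z` whose marginals (pushforwards along the projections) are `p` and `q`. -/
def IsCoupling {Z : Type*} [MeasurableSpace Z] (r : Measure (Z × Z)) (p q : Measure Z) : Prop :=
  r.map Prod.fst = p ∧ r.map Prod.snd = q

/-- The empirical distribution of a tuple `x : Fin n → X`: the uniform average
`(1/n) ∑ i, δ_{x i}` of Dirac measures. -/
noncomputable def empDist {X : Type*} [MeasurableSpace X] {n : ℕ} (x : Fin n → X) :
    Measure X :=
  ((n : ENNReal))⁻¹ • ∑ i : Fin n, Measure.dirac (x i)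

lemma empDist_apply' {X : Type*} [MeasurableSpace X] {n : ℕ} (x : Fin n → X) {s : Set X}
    (hs : MeasurableSet s) [DecidablePred fun i => x i ∈ s] :
    empDist x s = (n : ENNReal)⁻¹ * (Finset.univ.filter fun i => x i ∈ s).card := by
  simp only [empDist, Measure.smul_apply, smul_eq_mul]
  congr 1
  rw [Measure.finset_sum_apply, ← Finset.sum_boole]
  refine Finset.sum_congr rfl fun i _ => ?_
  rw [Measure.dirac_apply' _ hs, Set.indicator_apply]
  simp

lemma card_filter_comp {k n : ℕ} (φ : Fin k → Fin n) (p : Fin n → Prop) [DecidablePred p] :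
    (Finset.univ.filter fun l => p (φ l)).card =
      ∑ i ∈ Finset.univ.filter p, (Finset.univ.filter fun l => φ l = i).card := by
  rw [Finset.card_eq_sum_card_fiberwise
    (f := φ) (t := Finset.univ.filter p)
    (fun l hl => Finset.mem_filter.mpr ⟨Finset.mem_univ _, (Finset.mem_filter.mp hl).2⟩)]
  refine Finset.sum_congr rfl fun i hi => ?_
  congr 1
  ext l
  simp only [Finset.mem_filter, Finset.mem_univ, true_and]
  exact ⟨fun h => h.2, fun h => ⟨by rw [h]; exact (Finset.mem_filter.mp hi).2, h⟩⟩

lemma card_filter_equiv {α β : Type*} [Fintype α] [Fintype β] [DecidableEq α] [DecidableEq β]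
    (e : α ≃ β) (p : β → Prop) [DecidablePred p] :
    (Finset.univ.filter fun a => p (e a)).card = (Finset.univ.filter p).card := by
  refine Finset.card_bij (fun a _ => e a) ?_ ?_ ?_
  · intro a ha
    simp only [Finset.mem_filter, Finset.mem_univ, true_and] at ha ⊢
    exact ha
  · intro a _ a' _ h
    exact e.injective h
  · intro b hb
    refine ⟨e.symm b, ?_, by simp⟩
    simp only [Finset.mem_filter, Finset.mem_univ, true_and] at hb ⊢
    simpa using hb

/-- Marginal computation: if `φ : Fin k → Fin n` has all fibers of equal cardinality and
`F ∘ g = x ∘ φ`, then the pushforward of the empirical distribution of `g` along `F`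
is the empirical distribution of `x`. -/
lemma map_empDist_eq {X Z : Type*} [MeasurableSpace X] [MeasurableSpace Z]
    {k n : ℕ} (hn : 0 < n) (hk : 0 < k) (φ : Fin k → Fin n)
    (hφ : ∀ i i' : Fin n,
      (Finset.univ.filter fun l => φ l = i).card =
        (Finset.univ.filter fun l => φ l = i').card)
    (x : Fin n → X) (g : Fin k → Z) (F : Z → X) (hF : Measurable F)
    (hg : ∀ l, F (g l) = x (φ l)) :
    (empDist g).map F = empDist x := by
  classical
  set i₀ : Fin n := ⟨0, hn⟩
  set c := (Finset.univ.filter fun l => φ l = i₀).card with hc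
  have hkc : k = n * c := by
    have h1 : (Finset.univ : Finset (Fin k)).card =
        ∑ i : Fin n, (Finset.univ.filter fun l => φ l = i).card :=
      Finset.card_eq_sum_card_fiberwise (fun l _ => Finset.mem_univ (φ l))
    have h2 : ∑ i : Fin n, (Finset.univ.filter fun l => φ l = i).card = ∑ _i : Fin n, c :=
      Finset.sum_congr rfl fun i _ => hφ i i₀
    simp only [Finset.card_univ, Fintype.card_fin] at h1
    rw [h1, h2, Finset.sum_const, Finset.card_univ, Fintype.card_fin, smul_eq_mul]
  have hc0 : (c : ENNReal) ≠ 0 := by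
    have : c ≠ 0 := by
      intro h
      rw [h, mul_zero] at hkc
      omega
    exact_mod_cast this
  ext s hs
  rw [Measure.map_apply hF hs, empDist_apply' g (hF hs), empDist_apply' x hs]
  have hfilt : (Finset.univ.filter fun l => g l ∈ F ⁻¹' s) =
      (Finset.univ.filter fun l => x (φ l) ∈ s) := by
    apply Finset.filter_congr
    intro l _
    simp [hg l]
  rw [hfilt, card_filter_comp φ (fun i => x i ∈ s)]
  have hsum : ∑ i ∈ Finset.univ.filter (fun i => x i ∈ s),
      (Finset.univ.filter fun l => φ l = i).card =
      (Finset.univ.filter fun i => x i ∈ s).card * c := by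
    rw [Finset.sum_congr rfl fun i _ => hφ i i₀, Finset.sum_const, smul_eq_mul]
  rw [hsum, hkc]
  push_cast
  rw [ENNReal.mul_inv (Or.inr (ENNReal.natCast_ne_top _)) (Or.inl (ENNReal.natCast_ne_top _))]
  set T : ENNReal := ((Finset.univ.filter fun i => x i ∈ s).card : ENNReal)
  calc (n : ENNReal)⁻¹ * (c : ENNReal)⁻¹ * (T * c)
      = (n : ENNReal)⁻¹ * T * ((c : ENNReal)⁻¹ * c) := by ring
    _ = (n : ENNReal)⁻¹ * T := by
        rw [ENNReal.inv_mul_cancel hc0 (ENNReal.natCast_ne_top _), mul_one]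

/-- Splitting Lemma: on an ordered metric space (closed partial order), the empirical
distribution of `x : Fin n → X` is below that of `y : Fin m → X` in the stochastic order
iff there are `k ≥ 1` and maps `φ : Fin k → Fin n`, `ψ : Fin k → Fin m` with all fibers of
equal cardinality such that `x (φ l) ≤ y (ψ l)` for every `l`. -/
theorem splitting_lemma
    {X : Type*} [MetricSpace X] [PartialOrder X] [MeasurableSpace X] [BorelSpace X]
    (hcl : IsClosed {z : X × X | z.1 ≤ z.2})
    {n m : ℕ} (hn : 0 < n) (hm : 0 < m) (x : Fin n → X) (y : Fin m → X) :
    (∃ r : Measure (X × X), IsCoupling r (empDist x) (empDist y) ∧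
        r {z : X × X | z.1 ≤ z.2}ᶜ = 0) ↔
      ∃ (k : ℕ) (_ : 0 < k) (φ : Fin k → Fin n) (ψ : Fin k → Fin m),
        (∀ i i' : Fin n,
          (Finset.univ.filter fun l => φ l = i).card =
            (Finset.univ.filter fun l => φ l = i').card) ∧
        (∀ j j' : Fin m,
          (Finset.univ.filter fun l => ψ l = j).card =
            (Finset.univ.filter fun l => ψ l = j').card) ∧
        (∀ l : Fin k, x (φ l) ≤ y (ψ l)) := by
  classical
  constructor
  · rintro ⟨r, ⟨hr1, hr2⟩, hr0⟩
    -- Hall-type condition extracted from the coupling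
    have key : ∀ A : Finset (Fin n),
        m * A.card ≤ n * (Finset.univ.filter fun j => ∃ i ∈ A, x i ≤ y j).card := by
      intro A
      set S : Set X := x '' (A : Set (Fin n)) with hS
      have hSmeas : MeasurableSet S := (A.finite_toSet.image x).measurableSet
      set U : Set X := ⋃ i ∈ A, {b | x i ≤ b} with hU
      have hUmeas : MeasurableSet U := by
        refine MeasurableSet.biUnion A.countable_toSet fun i _ => ?_
        have : IsClosed {b | x i ≤ b} := hcl.preimage (Continuous.prodMk_right (x i))
        exact this.measurableSet
      have h1 : empDist x S = r (S ×ˢ Set.univ) := by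
        rw [Set.prod_univ, ← Measure.map_apply measurable_fst hSmeas, hr1]
      have h2 : r (Set.univ ×ˢ U) = empDist y U := by
        rw [Set.univ_prod, ← Measure.map_apply measurable_snd hUmeas, hr2]
      have hsub : S ×ˢ Set.univ ⊆ (Set.univ ×ˢ U) ∪ {z : X × X | z.1 ≤ z.2}ᶜ := by
        rintro ⟨a, b⟩ ⟨ha, -⟩
        by_cases hab : a ≤ b
        · left
          refine ⟨trivial, ?_⟩
          obtain ⟨i, hi, rfl⟩ := ha
          exact Set.mem_biUnion hi hab
        · right; exact hab
      have hle : empDist x S ≤ empDist y U := by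
        calc empDist x S = r (S ×ˢ Set.univ) := h1
          _ ≤ r (Set.univ ×ˢ U) + r {z : X × X | z.1 ≤ z.2}ᶜ :=
            le_trans (measure_mono hsub) (measure_union_le _ _)
          _ = empDist y U := by rw [hr0, add_zero, h2]
      rw [empDist_apply' x hSmeas, empDist_apply' y hUmeas] at hle
      have hcA : A.card ≤ (Finset.univ.filter fun i => x i ∈ S).card := by
        refine Finset.card_le_card fun i hi => ?_
        exact Finset.mem_filter.mpr ⟨Finset.mem_univ _, ⟨i, hi, rfl⟩⟩
      have hcJ : (Finset.univ.filter fun j => y j ∈ U) =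
          (Finset.univ.filter fun j => ∃ i ∈ A, x i ≤ y j) := by
        apply Finset.filter_congr
        intro j _
        simp [hU, Set.mem_iUnion]
      rw [hcJ] at hle
      set a : ENNReal := ((Finset.univ.filter fun i => x i ∈ S).card : ENNReal) with ha
      set b : ENNReal := ((Finset.univ.filter fun j => ∃ i ∈ A, x i ≤ y j).card : ENNReal) with hb
      have hn0 : (n : ENNReal) ≠ 0 := by exact_mod_cast hn.ne'
      have hm0 : (m : ENNReal) ≠ 0 := by exact_mod_cast hm.ne'
      have h3 : a ≤ (n : ENNReal) * (m : ENNReal)⁻¹ * b := by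
        calc a = (n : ENNReal) * ((n : ENNReal)⁻¹ * a) := by
              rw [← mul_assoc, ENNReal.mul_inv_cancel hn0 (ENNReal.natCast_ne_top _), one_mul]
          _ ≤ (n : ENNReal) * ((m : ENNReal)⁻¹ * b) := mul_le_mul_right hle _
          _ = (n : ENNReal) * (m : ENNReal)⁻¹ * b := by rw [mul_assoc]
      have h4 : (m : ENNReal) * a ≤ (n : ENNReal) * b := by
        calc (m : ENNReal) * a ≤ (m : ENNReal) * ((n : ENNReal) * (m : ENNReal)⁻¹ * b) :=
              mul_le_mul_right h3 _
          _ = ((m : ENNReal) * (m : ENNReal)⁻¹) * ((n : ENNReal) * b) := by ring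
          _ = (n : ENNReal) * b := by
              rw [ENNReal.mul_inv_cancel hm0 (ENNReal.natCast_ne_top _), one_mul]
      have h5 : ((m * A.card : ℕ) : ENNReal) ≤
          ((n * (Finset.univ.filter fun j => ∃ i ∈ A, x i ≤ y j).card : ℕ) : ENNReal) := by
        push_cast
        calc (m : ENNReal) * (A.card : ENNReal) ≤ (m : ENNReal) * a := by
              gcongr
              rw [ha]
              exact_mod_cast hcA
          _ ≤ (n : ENNReal) * b := h4
      exact_mod_cast h5
    -- Set up Hall's marriage theorem
    set t : (Fin n × Fin m) → Finset (Fin m × Fin n) := fun p =>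
      (Finset.univ.filter fun j => x p.1 ≤ y j) ×ˢ Finset.univ with ht
    have hall : ∀ s : Finset (Fin n × Fin m), s.card ≤ (s.biUnion t).card := by
      intro s
      set A := s.image Prod.fst with hA
      have h1 : s.card ≤ A.card * m := by
        calc s.card ≤ (A ×ˢ (Finset.univ : Finset (Fin m))).card := by
              refine Finset.card_le_card fun p hp => ?_
              exact Finset.mem_product.mpr ⟨Finset.mem_image_of_mem _ hp, Finset.mem_univ _⟩
          _ = A.card * m := by rw [Finset.card_product, Finset.card_univ, Fintype.card_fin]
      have h2 : s.biUnion t =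
          (Finset.univ.filter fun j => ∃ i ∈ A, x i ≤ y j) ×ˢ Finset.univ := by
        ext q
        simp only [Finset.mem_biUnion, ht, Finset.mem_product, Finset.mem_filter,
          Finset.mem_univ, true_and, and_true, hA, Finset.mem_image]
        constructor
        · rintro ⟨p, hp, hq⟩
          exact ⟨p.1, ⟨p, hp, rfl⟩, hq⟩
        · rintro ⟨i, ⟨p, hp, rfl⟩, hq⟩
          exact ⟨p, hp, hq⟩
      rw [h2, Finset.card_product, Finset.card_univ, Fintype.card_fin]
      refine le_trans h1 ?_
      have := key A
      calc A.card * m = m * A.card := mul_comm _ _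
        _ ≤ n * (Finset.univ.filter fun j => ∃ i ∈ A, x i ≤ y j).card := this
        _ = (Finset.univ.filter fun j => ∃ i ∈ A, x i ≤ y j).card * n := mul_comm _ _
    obtain ⟨f, hfinj, hft⟩ := (Finset.all_card_le_biUnion_card_iff_exists_injective t).mp hall
    have hfle : ∀ p : Fin n × Fin m, x p.1 ≤ y (f p).1 := by
      intro p
      have := hft p
      rw [ht] at this
      simp only [Finset.mem_product, Finset.mem_filter, Finset.mem_univ, true_and] at this
      exact this.1
    set e : Fin (n * m) ≃ Fin n × Fin m := finProdFinEquiv.symm with he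
    have hbij : Function.Bijective (fun l : Fin (n * m) => f (e l)) := by
      refine (Fintype.bijective_iff_injective_and_card _).mpr ⟨?_, by simp [Nat.mul_comm]⟩
      exact hfinj.comp e.injective
    set e' : Fin (n * m) ≃ Fin m × Fin n := Equiv.ofBijective _ hbij with he'
    refine ⟨n * m, Nat.mul_pos hn hm, fun l => (e l).1, fun l => (f (e l)).1, ?_, ?_, ?_⟩
    · intro i i'
      have hgen : ∀ i : Fin n,
          (Finset.univ.filter fun l : Fin (n * m) => (e l).1 = i).card = m := by
        intro i
        rw [card_filter_equiv e (fun p => p.1 = i)]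
        have : (Finset.univ.filter fun p : Fin n × Fin m => p.1 = i) =
            ({i} : Finset (Fin n)) ×ˢ Finset.univ := by
          ext p
          simp only [Finset.mem_filter, Finset.mem_univ, true_and, Finset.mem_product,
            Finset.mem_singleton, and_true]
        rw [this, Finset.card_product, Finset.card_singleton, Finset.card_univ,
          Fintype.card_fin, one_mul]
      rw [hgen i, hgen i']
    · intro j j'
      have hgen : ∀ j : Fin m,
          (Finset.univ.filter fun l : Fin (n * m) => (f (e l)).1 = j).card = n := by
        intro j
        have : (Finset.univ.filter fun l : Fin (n * m) => (f (e l)).1 = j) =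
            (Finset.univ.filter fun l : Fin (n * m) => (e' l).1 = j) := rfl
        rw [this, card_filter_equiv e' (fun q => q.1 = j)]
        have h2 : (Finset.univ.filter fun q : Fin m × Fin n => q.1 = j) =
            ({j} : Finset (Fin m)) ×ˢ Finset.univ := by
          ext q
          simp only [Finset.mem_filter, Finset.mem_univ, true_and, Finset.mem_product,
            Finset.mem_singleton, and_true]
        rw [h2, Finset.card_product, Finset.card_singleton, Finset.card_univ,
          Fintype.card_fin, one_mul]
      rw [hgen j, hgen j']
    · intro l
      exact hfle (e l)
  · rintro ⟨k, hk, φ, ψ, hφ, hψ, hxy⟩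
    set z : Fin k → X × X := fun l => (x (φ l), y (ψ l)) with hz
    refine ⟨empDist z, ⟨?_, ?_⟩, ?_⟩
    · exact map_empDist_eq hn hk φ hφ x z Prod.fst measurable_fst fun l => rfl
    · exact map_empDist_eq hm hk ψ hψ y z Prod.snd measurable_snd fun l => rfl
    · have hdz : ∀ l, Measure.dirac (z l) {w : X × X | w.1 ≤ w.2}ᶜ = 0 := by
        intro l
        refine le_antisymm ?_ zero_le
        have hsub : {w : X × X | w.1 ≤ w.2}ᶜ ⊆ ({z l} : Set (X × X))ᶜ := by
          refine Set.compl_subset_compl.mpr ?_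
          rw [Set.singleton_subset_iff]
          exact hxy l
        refine le_trans (measure_mono hsub) ?_
        rw [Measure.dirac_apply' _ (measurableSet_singleton _).compl]
        simp
      simp only [empDist, Measure.smul_apply, Measure.finset_sum_apply, smul_eq_mul]
      rw [Finset.sum_congr rfl fun l _ => hdz l]
      simp
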